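/- Let G be an n×n (n ≥ 2) irreducible and aperiodic matrix with nonnegative entries and Perron eigenvalue Λ₁(G). Then for every index i, the determinant of the matrix obtained from Λ₁(G)·I − G by deleting the i-th row and i-th column is strictly positive. -/

import Mathlib

open Polynomial Matrix

/-- The spectral radius (Perron eigenvalue for nonnegative irreducible matrices)
of a real square matrix: the supremum of the moduli of its complex eigenvalues. -/
noncomputable def specRad {m : Type*} [Fintype m] [DecidableEq m]
    (G : Matrix m m ℝ) : ℝ :=
  sSup {r : ℝ | ∃ μ ∈ spectrum ℂ (G.map (Complex.ofReal)), r = ‖μ‖}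

section aux

variable {n : Type*} [Fintype n] [DecidableEq n]

lemma my_eval_charpoly {R : Type*} [CommRing R]
    (M : Matrix n n R) (x : R) :
    M.charpoly.eval x = (x • (1 : Matrix n n R) - M).det := by
  rw [Matrix.charpoly, ← Polynomial.coe_evalRingHom, RingHom.map_det]
  congr 1
  ext i j
  simp [charmatrix_apply, Matrix.one_apply, Matrix.diagonal_apply, apply_ite]

lemma my_mem_spectrum_iff (M : Matrix n n ℂ) (μ : ℂ) :
    μ ∈ spectrum ℂ M ↔ M.charpoly.eval μ = 0 := by
  rw [spectrum.mem_iff, Matrix.isUnit_iff_isUnit_det, isUnit_iff_ne_zero, not_not]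
  have : (algebraMap ℂ (Matrix n n ℂ)) μ - M = μ • (1 : Matrix n n ℂ) - M := by
    rw [Algebra.algebraMap_eq_smul_one]
  rw [this, ← my_eval_charpoly]

lemma my_spec_pow (M : Matrix n n ℂ) (l : ℝ)
    (hb : ∀ μ ∈ spectrum ℂ M, ‖μ‖ ≤ l) (p : ℕ) (hp : 0 < p)
    (μ : ℂ) (hμ : μ ∈ spectrum ℂ (M ^ p)) : ‖μ‖ ≤ l ^ p := by
  set q : ℂ[X] := X ^ p - C μ with hq
  have hmq : q.Monic := monic_X_pow_sub_C μ hp.ne'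
  have hsq : q.Splits := IsAlgClosed.splits q
  have hfac : q = (q.roots.map fun a => X - C a).prod :=
    (hsq.eq_prod_roots_of_monic hmq)
  have hdet : ((Polynomial.aeval M) q).det = 0 := by
    have h1 : μ • (1 : Matrix n n ℂ) - M ^ p = -(Polynomial.aeval M q) := by
      rw [hq]
      simp only [map_sub, map_pow, aeval_X, aeval_C, Algebra.algebraMap_eq_smul_one]
      abel
    have h2 := (my_mem_spectrum_iff (M ^ p) μ).mp hμ
    rw [my_eval_charpoly, h1, Matrix.det_neg] at h2
    rcases mul_eq_zero.mp h2 with h | h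
    · exact absurd h (pow_ne_zero _ (by norm_num))
    · exact h
  have key : ∀ s : Multiset ℂ,
      ((Polynomial.aeval M) (s.map (fun a => X - C a)).prod).det
        = (s.map (fun a => ((Polynomial.aeval M) (X - C a)).det)).prod := by
    intro s
    induction s using Multiset.induction with
    | empty => simp
    | cons a s ih => simp [Multiset.map_cons, Multiset.prod_cons, ih]
  have hprod : ((q.roots.map fun a => ((Polynomial.aeval M) (X - C a)).det).prod) = 0 := by
    rw [← key, ← hfac, hdet]
  have h0 : (0 : ℂ) ∈ q.roots.map fun a => ((Polynomial.aeval M) (X - C a)).det :=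
    Multiset.prod_eq_zero_iff.mp hprod
  obtain ⟨a, ha, hx0⟩ := Multiset.mem_map.mp h0
  have haspec : a ∈ spectrum ℂ M := by
    rw [my_mem_spectrum_iff, my_eval_charpoly]
    have : a • (1 : Matrix n n ℂ) - M = -((Polynomial.aeval M) (X - C a)) := by
      simp [Algebra.smul_def]
    rw [this, Matrix.det_neg, hx0, mul_zero]
  have hap : a ^ p = μ := by
    have := isRoot_of_mem_roots ha
    simpa [hq, sub_eq_zero] using this
  calc ‖μ‖ = ‖a‖ ^ p := by rw [← hap, norm_pow]
    _ ≤ l ^ p := pow_le_pow_left₀ (norm_nonneg a) (hb a haspec) p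

lemma my_trace_bound [Nonempty n] (M : Matrix n n ℂ) (l : ℝ) (hl : 0 ≤ l)
    (hb : ∀ μ ∈ spectrum ℂ M, ‖μ‖ ≤ l) (p : ℕ) (hp : 0 < p) :
    ‖Matrix.trace (M ^ p)‖ ≤ (Fintype.card n) * l ^ p := by
  rw [Matrix.trace_eq_sum_roots_charpoly]
  have hroots : ∀ a ∈ (M ^ p).charpoly.roots, ‖a‖ ≤ l ^ p := by
    intro a ha
    exact my_spec_pow M l hb p hp a
      ((my_mem_spectrum_iff _ _).mpr (isRoot_of_mem_roots ha))
  have habs : ∀ s : Multiset ℂ, (∀ a ∈ s, ‖a‖ ≤ l ^ p) →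
      ‖s.sum‖ ≤ s.card * l ^ p := by
    intro s
    induction s using Multiset.induction with
    | empty => simp
    | cons a s ih =>
      intro h
      rw [Multiset.sum_cons, Multiset.card_cons]
      calc ‖a + s.sum‖ ≤ ‖a‖ + ‖s.sum‖ :=
            norm_add_le _ _
        _ ≤ l ^ p + s.card * l ^ p := add_le_add (h a (Multiset.mem_cons_self a s))
            (ih fun b hb => h b (Multiset.mem_cons_of_mem hb))
        _ = ((s.card : ℝ) + 1) * l ^ p := by ring
        _ = ((s.card + 1 : ℕ) : ℝ) * l ^ p := by push_cast; ring
  have hcard : ((M ^ p).charpoly.roots.card : ℝ) ≤ (Fintype.card n : ℝ) := by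
    have h1 : (M ^ p).charpoly.roots.card ≤ (M ^ p).charpoly.natDegree :=
      (M ^ p).charpoly.card_roots'
    have h2 : (M ^ p).charpoly.natDegree = Fintype.card n :=
      Matrix.charpoly_natDegree_eq_dim _
    exact_mod_cast h2 ▸ h1
  calc ‖(M ^ p).charpoly.roots.sum‖ ≤ (M ^ p).charpoly.roots.card * l ^ p :=
        habs _ hroots
    _ ≤ (Fintype.card n) * l ^ p :=
        mul_le_mul_of_nonneg_right hcard (pow_nonneg hl p)

lemma my_specRad_bound [Nonempty n] (G : Matrix n n ℝ) :
    0 ≤ specRad G ∧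
      ∀ μ ∈ spectrum ℂ (G.map Complex.ofReal), ‖μ‖ ≤ specRad G := by
  set Gc := G.map (Complex.ofReal) with hGc
  set S := {r : ℝ | ∃ μ ∈ spectrum ℂ Gc, r = ‖μ‖} with hS
  have hfin : S.Finite := by
    have h1 : S ⊆ (fun z : ℂ => ‖z‖) '' {z | z ∈ Gc.charpoly.roots.toFinset} := by
      rintro r ⟨μ, hμ, rfl⟩
      refine ⟨μ, ?_, rfl⟩
      simp only [Set.mem_setOf_eq, Multiset.mem_toFinset]
      rw [Polynomial.mem_roots (Gc.charpoly_monic).ne_zero]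
      exact (my_mem_spectrum_iff Gc μ).mp hμ
    exact Set.Finite.subset ((Gc.charpoly.roots.toFinset : Finset ℂ).finite_toSet.image _) h1
  have hne : S.Nonempty := by
    have hdeg : 0 < Gc.charpoly.degree := by
      rw [Matrix.charpoly_degree_eq_dim]
      exact_mod_cast Fintype.card_pos
    obtain ⟨z, hz⟩ := Complex.exists_root hdeg
    exact ⟨‖z‖, z, (my_mem_spectrum_iff Gc z).mpr hz, rfl⟩
  have hbdd : BddAbove S := hfin.bddAbove
  have hub : ∀ μ ∈ spectrum ℂ Gc, ‖μ‖ ≤ specRad G :=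
    fun μ hμ => le_csSup hbdd ⟨μ, hμ, rfl⟩
  refine ⟨?_, hub⟩
  obtain ⟨r, μ, hμ, rfl⟩ := hne
  exact le_trans (norm_nonneg μ) (hub μ hμ)

lemma my_mulVec_le (M : Matrix n n ℝ) (hM : ∀ i j, 0 ≤ M i j) {x y : n → ℝ}
    (h : ∀ j, x j ≤ y j) (j : n) : (M *ᵥ x) j ≤ (M *ᵥ y) j := by
  simp only [Matrix.mulVec, dotProduct]
  exact Finset.sum_le_sum fun j' _ => mul_le_mul_of_nonneg_left (h j') (hM j j')

lemma my_pow_nonneg (M : Matrix n n ℝ) (hM : ∀ i j, 0 ≤ M i j) :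
    ∀ m i j, 0 ≤ (M ^ m) i j := by
  intro m
  induction m with
  | zero =>
    intro i j
    rw [pow_zero]
    by_cases h : i = j <;> simp [Matrix.one_apply, h]
  | succ m ih =>
    intro i j
    rw [pow_succ, Matrix.mul_apply]
    exact Finset.sum_nonneg fun _ _ => mul_nonneg (ih _ _) (hM _ _)

end aux
theorem perron_minor_det_pos (n : ℕ) (G : Matrix (Fin (n + 2)) (Fin (n + 2)) ℝ)
    (hnonneg : ∀ i j, 0 ≤ G i j)
    (hprim : ∃ k : ℕ, ∀ i j, 0 < (G ^ k) i j) :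
    ∀ i : Fin (n + 2),
      0 < ((specRad G • (1 : Matrix (Fin (n + 2)) (Fin (n + 2)) ℝ) - G).submatrix
        i.succAbove i.succAbove).det := by
  classical
  obtain ⟨k, hk⟩ := hprim
  have hk0 : 0 < k := by
    rcases Nat.eq_zero_or_pos k with rfl | h
    · exfalso
      have h01 : (0 : Fin (n + 2)) ≠ 1 := by simp [Fin.ext_iff]
      have := hk 0 1
      rw [pow_zero, Matrix.one_apply_ne h01] at this
      exact lt_irrefl 0 this
    · exact h
  set l := specRad G with hldef
  obtain ⟨hl0, hbound⟩ := my_specRad_bound G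
  intro i
  set σ : Fin (n + 1) → Fin (n + 2) := i.succAbove with hσdef
  have hσ : Function.Injective σ := Fin.succAbove_right_injective
  set H : Matrix (Fin (n + 1)) (Fin (n + 1)) ℝ := G.submatrix σ σ with hH
  have hHnn : ∀ a b, 0 ≤ H a b := fun a b => hnonneg _ _
  have hgoal_eq : (l • (1 : Matrix (Fin (n + 2)) (Fin (n + 2)) ℝ) - G).submatrix σ σ
      = l • (1 : Matrix (Fin (n + 1)) (Fin (n + 1)) ℝ) - H := by
    ext a b
    simp only [Matrix.submatrix_apply, Matrix.sub_apply, Matrix.smul_apply, Matrix.one_apply,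
      hσ.eq_iff, smul_eq_mul, hH]
  rw [hgoal_eq, ← my_eval_charpoly]
  by_contra hcon
  push_neg at hcon
  -- a real eigenvalue t ≥ l of H
  obtain ⟨t, hlt, hteq⟩ : ∃ t, l ≤ t ∧ H.charpoly.eval t = 0 := by
    have hmonic := H.charpoly_monic
    have hdeg : 0 < H.charpoly.degree := by
      rw [Matrix.charpoly_degree_eq_dim]
      exact_mod_cast Fintype.card_pos
    have htop := Polynomial.tendsto_atTop_of_leadingCoeff_nonneg H.charpoly hdeg
      (by rw [hmonic.leadingCoeff]; norm_num)
    obtain ⟨b, hb1, hb2⟩ :=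
      ((htop.eventually_ge_atTop 1).and (Filter.eventually_ge_atTop l)).exists
    have hct : ContinuousOn (fun x => H.charpoly.eval x) (Set.Icc l b) :=
      (Polynomial.continuous _).continuousOn
    have h0mem : (0 : ℝ) ∈ Set.Icc (H.charpoly.eval l) (H.charpoly.eval b) :=
      ⟨hcon, le_trans zero_le_one hb1⟩
    obtain ⟨t, ht_mem, ht_eq⟩ := intermediate_value_Icc hb2 hct h0mem
    exact ⟨t, ht_mem.1, ht_eq⟩
  have ht0 : 0 ≤ t := le_trans hl0 hlt
  have hdet0 : (t • (1 : Matrix (Fin (n + 1)) (Fin (n + 1)) ℝ) - H).det = 0 := by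
    rw [← my_eval_charpoly]; exact hteq
  obtain ⟨v, hv0, hveq⟩ := (Matrix.exists_mulVec_eq_zero_iff).mpr hdet0
  have hHv : H *ᵥ v = t • v := by
    rw [Matrix.sub_mulVec, Matrix.smul_mulVec, Matrix.one_mulVec, sub_eq_zero] at hveq
    exact hveq.symm
  -- the nonnegative vector w
  set w : Fin (n + 2) → ℝ := fun j => if h : ∃ a, σ a = j then |v h.choose| else 0 with hw
  have hwσ : ∀ a, w (σ a) = |v a| := by
    intro a
    have hex : ∃ a', σ a' = σ a := ⟨a, rfl⟩
    rw [hw]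
    dsimp only
    rw [dif_pos hex]
    congr 1
    exact congrArg v (hσ hex.choose_spec)
  have hwi : w i = 0 := by
    rw [hw]
    dsimp only
    rw [dif_neg]
    rintro ⟨a, ha⟩
    exact Fin.succAbove_ne i a ha
  have hw0 : ∀ j, 0 ≤ w j := by
    intro j
    rw [hw]
    dsimp only
    split
    · exact abs_nonneg _
    · exact le_refl 0
  have hwpos : ∃ j, 0 < w j := by
    have hvex : ∃ a, v a ≠ 0 := by
      by_contra h
      push_neg at h
      exact hv0 (funext fun a => h a)
    obtain ⟨a, ha⟩ := hvex
    exact ⟨σ a, by rw [hwσ]; exact abs_pos.mpr ha⟩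
  -- the basic inequality G w ≥ t w
  have hGw : ∀ j, t * w j ≤ (G *ᵥ w) j := by
    intro j
    rcases eq_or_ne j i with rfl | hji
    · rw [hwi, mul_zero]
      simp only [Matrix.mulVec, dotProduct]
      exact Finset.sum_nonneg fun j' _ => mul_nonneg (hnonneg _ _) (hw0 j')
    · obtain ⟨a, rfl⟩ := Fin.exists_succAbove_eq hji
      have hsum : (G *ᵥ w) (σ a) = ∑ b, H a b * |v b| := by
        simp only [Matrix.mulVec, dotProduct]
        rw [Fin.sum_univ_succAbove (fun j' => G (σ a) j' * w j') i]
        rw [hwi, mul_zero, zero_add]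
        refine Finset.sum_congr rfl fun b _ => ?_
        rw [hwσ]
        rfl
      rw [hsum, hwσ]
      have h1 : t * |v a| = |(H *ᵥ v) a| := by
        rw [hHv, Pi.smul_apply, smul_eq_mul, abs_mul, abs_of_nonneg ht0]
      rw [h1]
      calc |(H *ᵥ v) a| = |∑ b, H a b * v b| := by
            simp only [Matrix.mulVec, dotProduct]
        _ ≤ ∑ b, |H a b * v b| := Finset.abs_sum_le_sum_abs _ _
        _ = ∑ b, H a b * |v b| := by
            refine Finset.sum_congr rfl fun b _ => ?_
            rw [abs_mul, abs_of_nonneg (hHnn a b)]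
  -- powers
  have hGmw : ∀ m j, t ^ m * w j ≤ ((G ^ m) *ᵥ w) j := by
    intro m
    induction m with
    | zero => intro j; simp [Matrix.one_mulVec]
    | succ m ih =>
      intro j
      have step1 : t ^ (m + 1) * w j ≤ t ^ m * (G *ᵥ w) j := by
        calc t ^ (m + 1) * w j = t ^ m * (t * w j) := by ring
          _ ≤ t ^ m * (G *ᵥ w) j :=
            mul_le_mul_of_nonneg_left (hGw j) (pow_nonneg ht0 m)
      have step2 : (G *ᵥ (t ^ m • w)) j ≤ (G *ᵥ ((G ^ m) *ᵥ w)) j :=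
        my_mulVec_le G hnonneg (fun j' => by
          have := ih j'
          simpa [Pi.smul_apply, smul_eq_mul] using this) j
      have heq1 : (G *ᵥ (t ^ m • w)) j = t ^ m * (G *ᵥ w) j := by
        rw [Matrix.mulVec_smul]
        simp [smul_eq_mul]
      have heq2 : G *ᵥ ((G ^ m) *ᵥ w) = (G ^ (m + 1)) *ᵥ w := by
        rw [Matrix.mulVec_mulVec, ← pow_succ']
      calc t ^ (m + 1) * w j ≤ t ^ m * (G *ᵥ w) j := step1
        _ = (G *ᵥ (t ^ m • w)) j := heq1.symm
        _ ≤ (G *ᵥ ((G ^ m) *ᵥ w)) j := step2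
        _ = ((G ^ (m + 1)) *ᵥ w) j := by rw [heq2]
  set A : Matrix (Fin (n + 2)) (Fin (n + 2)) ℝ := G ^ k with hA
  have hApos : ∀ a b, 0 < A a b := hk
  have hAnn : ∀ a b, 0 ≤ A a b := fun a b => (hApos a b).le
  set s : ℝ := t ^ k with hs
  have hs0 : 0 ≤ s := pow_nonneg ht0 k
  have hsw : ∀ j, s * w j ≤ (A *ᵥ w) j := hGmw k
  set u : Fin (n + 2) → ℝ := A *ᵥ w with hu
  obtain ⟨j₀, hj₀⟩ := hwpos
  have hupos : ∀ j, 0 < u j := by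
    intro j
    rw [hu]
    simp only [Matrix.mulVec, dotProduct]
    refine Finset.sum_pos' (fun j' _ => mul_nonneg (hAnn _ _) (hw0 j')) ?_
    exact ⟨j₀, Finset.mem_univ _, mul_pos (hApos j j₀) hj₀⟩
  set z : Fin (n + 2) → ℝ := fun j => u j - s * w j with hz
  have hz0 : ∀ j, 0 ≤ z j := fun j => sub_nonneg.mpr (hsw j)
  have hzi : 0 < z i := by
    rw [hz]
    dsimp only
    rw [hwi, mul_zero, sub_zero]
    exact hupos i
  have hAz : ∀ j, 0 < (A *ᵥ z) j := by
    intro j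
    simp only [Matrix.mulVec, dotProduct]
    refine Finset.sum_pos' (fun j' _ => mul_nonneg (hAnn _ _) (hz0 j')) ?_
    exact ⟨i, Finset.mem_univ _, mul_pos (hApos j i) hzi⟩
  have hAu : ∀ j, s * u j < (A *ᵥ u) j := by
    intro j
    have hdecomp : u = z + s • w := by
      funext j'
      simp only [Pi.add_apply, Pi.smul_apply, smul_eq_mul, hz]
      ring
    have h3 : (A *ᵥ u) j = (A *ᵥ z) j + s * u j := by
      conv_lhs => rw [hdecomp]
      rw [Matrix.mulVec_add, Matrix.mulVec_smul]
      simp [smul_eq_mul, hu]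
    rw [h3]
    exact lt_add_of_pos_left _ (hAz j)
  -- the improved ratio c
  have hne : (Finset.univ : Finset (Fin (n + 2))).Nonempty := Finset.univ_nonempty
  set c : ℝ := Finset.univ.inf' hne (fun j => (A *ᵥ u) j / u j) with hc
  have hcs : s < c := by
    rw [hc, Finset.lt_inf'_iff]
    intro j _
    rw [lt_div_iff₀ (hupos j)]
    exact hAu j
  have hc0 : 0 < c := lt_of_le_of_lt hs0 hcs
  have hcu : ∀ j, c * u j ≤ (A *ᵥ u) j := by
    intro j
    have h1 : c ≤ (A *ᵥ u) j / u j := Finset.inf'_le _ (Finset.mem_univ j)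
    exact (le_div_iff₀ (hupos j)).mp h1
  have hlkc : l ^ k < c := lt_of_le_of_lt (pow_le_pow_left₀ hl0 hlt k) hcs
  -- iterating
  have hAmu : ∀ m j, c ^ m * u j ≤ ((A ^ m) *ᵥ u) j := by
    intro m
    induction m with
    | zero => intro j; simp [Matrix.one_mulVec]
    | succ m ih =>
      intro j
      have step2 : (A *ᵥ (c ^ m • u)) j ≤ (A *ᵥ ((A ^ m) *ᵥ u)) j :=
        my_mulVec_le A hAnn (fun j' => by
          have := ih j'
          simpa [Pi.smul_apply, smul_eq_mul] using this) j
      have heq1 : (A *ᵥ (c ^ m • u)) j = c ^ m * (A *ᵥ u) j := by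
        rw [Matrix.mulVec_smul]
        simp [smul_eq_mul]
      calc c ^ (m + 1) * u j = c ^ m * (c * u j) := by ring
        _ ≤ c ^ m * (A *ᵥ u) j :=
          mul_le_mul_of_nonneg_left (hcu j) (pow_nonneg hc0.le m)
        _ = (A *ᵥ (c ^ m • u)) j := heq1.symm
        _ ≤ (A *ᵥ ((A ^ m) *ᵥ u)) j := step2
        _ = ((A ^ (m + 1)) *ᵥ u) j := by rw [Matrix.mulVec_mulVec, ← pow_succ']
  -- sums
  set T : ℝ := ∑ j, u j with hT
  have hTpos : 0 < T := Finset.sum_pos (fun j _ => hupos j) hne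
  set umax : ℝ := Finset.univ.sup' hne u with humax
  have humax_le : ∀ j, u j ≤ umax := fun j => Finset.le_sup' u (Finset.mem_univ j)
  have humax_pos : 0 < umax := lt_of_lt_of_le (hupos j₀) (humax_le j₀)
  set S : ℕ → ℝ := fun m => ∑ j, ∑ j', (A ^ m) j j' with hSdef
  have hSnn : ∀ m j j', 0 ≤ (A ^ m) j j' := fun m => my_pow_nonneg A hAnn m
  have hSm : ∀ m, c ^ m * T ≤ umax * S m := by
    intro m
    have h1 : c ^ m * T = ∑ j, c ^ m * u j := by
      rw [hT, Finset.mul_sum]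
    have h2 : ∀ j, ((A ^ m) *ᵥ u) j = ∑ j', (A ^ m) j j' * u j' := by
      intro j
      simp [Matrix.mulVec, dotProduct]
    calc c ^ m * T = ∑ j, c ^ m * u j := h1
      _ ≤ ∑ j, ((A ^ m) *ᵥ u) j := Finset.sum_le_sum fun j _ => hAmu m j
      _ = ∑ j, ∑ j', (A ^ m) j j' * u j' := by
          exact Finset.sum_congr rfl fun j _ => h2 j
      _ ≤ ∑ j, ∑ j', (A ^ m) j j' * umax :=
          Finset.sum_le_sum fun j _ => Finset.sum_le_sum fun j' _ =>
            mul_le_mul_of_nonneg_left (humax_le j') (hSnn m j j')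
      _ = umax * S m := by
          rw [hSdef]
          simp only [← Finset.sum_mul]
          ring
  set δ : ℝ := Finset.univ.inf' hne (fun j => Finset.univ.inf' hne (fun j' => A j j')) with hδ
  have hδpos : 0 < δ := by
    rw [hδ, Finset.lt_inf'_iff]
    intro j _
    rw [Finset.lt_inf'_iff]
    intro j' _
    exact hApos j j'
  have hδle : ∀ j j', δ ≤ A j j' := by
    intro j j'
    calc δ ≤ Finset.univ.inf' hne (fun j' => A j j') :=
          Finset.inf'_le _ (Finset.mem_univ j)
      _ ≤ A j j' := Finset.inf'_le _ (Finset.mem_univ j')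
  have htr : ∀ m, δ * S m ≤ Matrix.trace (A ^ (m + 1)) := by
    intro m
    have h1 : Matrix.trace (A ^ (m + 1)) = ∑ j, ∑ j', (A ^ m) j j' * A j' j := by
      rw [Matrix.trace]
      refine Finset.sum_congr rfl fun j _ => ?_
      rw [Matrix.diag_apply, pow_succ, Matrix.mul_apply]
    rw [h1, hSdef]
    rw [Finset.mul_sum]
    refine Finset.sum_le_sum fun j _ => ?_
    rw [Finset.mul_sum]
    refine Finset.sum_le_sum fun j' _ => ?_
    calc δ * (A ^ m) j j' = (A ^ m) j j' * δ := by ring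
      _ ≤ (A ^ m) j j' * A j' j :=
        mul_le_mul_of_nonneg_left (hδle j' j) (hSnn m j j')
  -- complex trace bound
  set Gc : Matrix (Fin (n + 2)) (Fin (n + 2)) ℂ := G.map Complex.ofReal with hGc
  have hmapk : ∀ p : ℕ, Gc ^ p = (G ^ p).map Complex.ofReal := by
    intro p
    have : Gc = (Complex.ofRealHom.mapMatrix : Matrix (Fin (n+2)) (Fin (n+2)) ℝ →+*
        Matrix (Fin (n+2)) (Fin (n+2)) ℂ) G := rfl
    rw [this, ← map_pow]
    rfl
  have htrace_map : ∀ m : ℕ,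
      Matrix.trace (Gc ^ (k * (m + 1))) = Complex.ofReal (Matrix.trace (A ^ (m + 1))) := by
    intro m
    rw [hmapk]
    have : G ^ (k * (m + 1)) = A ^ (m + 1) := by
      rw [hA, ← pow_mul]
    rw [this]
    simp [Matrix.trace, Matrix.map_apply, Matrix.diag_apply]
  have htrace_bound : ∀ m : ℕ,
      Matrix.trace (A ^ (m + 1)) ≤ (n + 2 : ℝ) * l ^ (k * (m + 1)) := by
    intro m
    have hb := my_trace_bound Gc l hl0 hbound (k * (m + 1))
      (Nat.mul_pos hk0 (Nat.succ_pos m))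
    rw [htrace_map m] at hb
    rw [Complex.norm_real, Real.norm_eq_abs] at hb
    have hcard : (Fintype.card (Fin (n + 2)) : ℝ) = (n + 2 : ℝ) := by
      simp
    rw [hcard] at hb
    exact le_trans (le_abs_self _) hb
  -- final contradiction
  set r : ℝ := l ^ k with hr
  have hr0 : 0 ≤ r := pow_nonneg hl0 k
  have hrc : r < c := hlkc
  have hkey : ∀ m : ℕ, δ * T * c ^ m ≤ umax * ((n + 2 : ℝ) * r) * r ^ m := by
    intro m
    have h1 : δ * (c ^ m * T) ≤ δ * (umax * S m) :=
      mul_le_mul_of_nonneg_left (hSm m) hδpos.le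
    have h2 : umax * (δ * S m) ≤ umax * ((n + 2 : ℝ) * l ^ (k * (m + 1))) :=
      mul_le_mul_of_nonneg_left (le_trans (htr m) (htrace_bound m)) humax_pos.le
    have h3 : l ^ (k * (m + 1)) = r * r ^ m := by
      rw [hr, show k * (m + 1) = k + k * m from by ring, pow_add, pow_mul]
    calc δ * T * c ^ m = δ * (c ^ m * T) := by ring
      _ ≤ δ * (umax * S m) := h1
      _ = umax * (δ * S m) := by ring
      _ ≤ umax * ((n + 2 : ℝ) * l ^ (k * (m + 1))) := h2
      _ = umax * ((n + 2 : ℝ) * r) * r ^ m := by rw [h3]; ring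
  have hDpos : 0 < δ * T := mul_pos hδpos hTpos
  have htend : Filter.Tendsto (fun m : ℕ => umax * ((n + 2 : ℝ) * r) * (r / c) ^ m)
      Filter.atTop (nhds 0) := by
    have h1 : |r / c| < 1 := by
      rw [abs_of_nonneg (div_nonneg hr0 hc0.le)]
      rw [div_lt_one hc0]
      exact hrc
    have := tendsto_pow_atTop_nhds_zero_of_abs_lt_one h1
    have h2 := this.const_mul (umax * ((n + 2 : ℝ) * r))
    simpa using h2
  obtain ⟨m, hm⟩ := (htend.eventually_lt_const hDpos).exists
  have hfin := hkey m
  have hpow : (r / c) ^ m * c ^ m = r ^ m := by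
    rw [div_pow, div_mul_cancel₀ _ (pow_ne_zero m hc0.ne')]
  have hrw : umax * ((n + 2 : ℝ) * r) * r ^ m
      = umax * ((n + 2 : ℝ) * r) * (r / c) ^ m * c ^ m := by
    rw [mul_assoc (umax * ((n + 2 : ℝ) * r)), hpow]
  rw [hrw] at hfin
  have hlast : δ * T * c ^ m < δ * T * c ^ m :=
    lt_of_le_of_lt hfin
      (mul_lt_mul_of_pos_right hm (pow_pos hc0 m))
  exact lt_irrefl _ hlast
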